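/- The function ψ(v) = g(G⁻¹(v))·G⁻¹(v) is differentiable on ℝ with ψ'(v) = 1 + g'(G⁻¹(v))·G⁻¹(v)/g(G⁻¹(v)), and 0 ≤ ψ'(v) ≤ 1 for every v ∈ ℝ; moreover |ψ(v)| ≤ (2/√3)|v| for every v ∈ ℝ. -/

import Mathlib

open Real Filter Set Topology

noncomputable def alph : ℝ := (9 + 3 * Real.sqrt 5) / 2

noncomputable def bet : ℝ := 2 * alph ^ ((3 : ℝ) / 2) * Real.sqrt (alph - 1)

noncomputable def g (k s : ℝ) : ℝ :=
  if |s| < 1 / Real.sqrt (alph * k) then Real.sqrt (1 - k * s ^ 2)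
  else 1 / (bet * k * s ^ 2) + Real.sqrt 3 / 2

noncomputable def G (k t : ℝ) : ℝ := ∫ s in (0 : ℝ)..t, g k s


lemma sqrt5_lb : (2:ℝ) ≤ Real.sqrt 5 := by
  nlinarith [Real.sq_sqrt (by norm_num : (5:ℝ) ≥ 0), Real.sqrt_nonneg 5]

lemma sqrt5_ub : Real.sqrt 5 ≤ 2.3 := by
  nlinarith [Real.sq_sqrt (by norm_num : (5:ℝ) ≥ 0), Real.sqrt_nonneg 5]

lemma alph_lb : (7.5:ℝ) ≤ alph := by unfold alph; nlinarith [sqrt5_lb]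
lemma alph_ub : alph ≤ 8 := by unfold alph; nlinarith [sqrt5_ub]
lemma alph_pos : (0:ℝ) < alph := by linarith [alph_lb]
lemma alph_sq : alph ^ 2 = 9 * (alph - 1) := by
  unfold alph
  have h := Real.sq_sqrt (by norm_num : (5:ℝ) ≥ 0)
  ring_nf
  nlinarith [h]

noncomputable def sa : ℝ := Real.sqrt alph
lemma sa_sq : sa ^ 2 = alph := Real.sq_sqrt alph_pos.le
lemma sa_nonneg : 0 ≤ sa := Real.sqrt_nonneg _
lemma sa_lb : (2.7:ℝ) ≤ sa := by nlinarith [sa_sq, sa_nonneg, alph_lb]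
lemma sa_ub : sa ≤ 3 := by nlinarith [sa_sq, sa_nonneg, alph_ub]
lemma sa_pos : 0 < sa := by linarith [sa_lb]

lemma sqrt3_lb : (1.7:ℝ) ≤ Real.sqrt 3 := by
  nlinarith [Real.sq_sqrt (by norm_num : (3:ℝ) ≥ 0), Real.sqrt_nonneg 3]
lemma sqrt3_ub : Real.sqrt 3 ≤ 1.8 := by
  nlinarith [Real.sq_sqrt (by norm_num : (3:ℝ) ≥ 0), Real.sqrt_nonneg 3]

lemma bet_eq : bet = 2/3 * alph ^ 2 * sa := by
  have h1 : Real.sqrt (alph - 1) = alph / 3 := by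
    have : alph - 1 = (alph/3)^2 := by nlinarith [alph_sq]
    rw [this, Real.sqrt_sq (by linarith [alph_lb])]
  have h2 : alph ^ ((3:ℝ)/2) = alph * sa := by
    rw [show (3:ℝ)/2 = 1 + 1/2 by norm_num, Real.rpow_add alph_pos, Real.rpow_one]
    rw [← Real.sqrt_eq_rpow]; rfl
  rw [bet, h1, h2]; ring

lemma bet_pos : 0 < bet := by
  rw [bet_eq]
  exact mul_pos (by nlinarith [alph_pos] : (0:ℝ) < 2/3 * alph^2) sa_pos

lemma key1 : Real.sqrt 3 * sa * alph = 3 * (2 * alph - 3) := by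
  have hw : (Real.sqrt 3 * sa)^2 = 3 * alph := by
    rw [mul_pow, Real.sq_sqrt (by norm_num : (3:ℝ) ≥ 0), sa_sq]
  have hsq : (Real.sqrt 3 * sa * alph)^2 = (3 * (2 * alph - 3))^2 := by
    have h3 : alph^2 = 9*(alph-1) := alph_sq
    nlinarith [hw]
  have hpos1 : 0 ≤ Real.sqrt 3 * sa * alph :=
    mul_nonneg (mul_nonneg (Real.sqrt_nonneg 3) sa_nonneg) alph_pos.le
  have hpos2 : (0:ℝ) ≤ 3 * (2 * alph - 3) := by linarith [alph_lb]
  nlinarith [hsq, hpos1, hpos2, sq_nonneg (Real.sqrt 3 * sa * alph - 3 * (2*alph - 3))]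

lemma junction_val : Real.sqrt (1 - 1/alph) = sa / 3 := by
  have hne : alph ≠ 0 := alph_pos.ne'
  have h : 1 - 1/alph = (sa/3)^2 := by
    rw [div_pow, sa_sq]
    field_simp
    linear_combination -alph_sq
  rw [h, Real.sqrt_sq (by linarith [sa_nonneg] : (0:ℝ) ≤ sa/3)]

lemma cont_id : sa / 3 = 3 / (2 * alph * sa) + Real.sqrt 3 / 2 := by
  have h1 := key1
  have h2 := sa_sq
  have h3 : sa ≠ 0 := sa_pos.ne'
  have h4 : alph ≠ 0 := alph_pos.ne'
  field_simp
  linear_combination -3*h1 + 2*alph*h2 + 2*alph_sq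

lemma inv_alph_small : (1:ℝ) / alph ≤ 2 / 15 := by
  rw [div_le_div_iff₀ alph_pos (by norm_num)]
  linarith [alph_lb]

lemma sqrt34 : Real.sqrt ((3:ℝ)/4) = Real.sqrt 3 / 2 := by
  rw [show (3:ℝ)/4 = (Real.sqrt 3 / 2)^2 by
    rw [div_pow, Real.sq_sqrt (by norm_num : (3:ℝ) ≥ 0)]; norm_num]
  exact Real.sqrt_sq (by positivity)

section
variable {k : ℝ} (hk : 0 < k)

noncomputable def s0 (k : ℝ) : ℝ := 1 / Real.sqrt (alph * k)

lemma sqrt_alph_mul : Real.sqrt (alph * k) = sa * Real.sqrt k :=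
  Real.sqrt_mul alph_pos.le k

include hk

lemma sk_pos : 0 < Real.sqrt k := Real.sqrt_pos.2 hk
lemma sk_sq : Real.sqrt k ^ 2 = k := Real.sq_sqrt hk.le

lemma s0_pos : 0 < s0 k := by
  rw [s0, sqrt_alph_mul]
  exact div_pos one_pos (mul_pos sa_pos (sk_pos hk))

lemma ks0_sq : k * s0 k ^ 2 = 1 / alph := by
  rw [s0, sqrt_alph_mul, div_pow, one_pow, mul_pow, sa_sq, sk_sq hk]
  field_simp

lemma ks_lt (s : ℝ) (hs : |s| < s0 k) : k * s ^ 2 < 1 / alph := by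
  have h1 : s ^ 2 < s0 k ^ 2 := by
    rw [← sq_abs s]
    exact pow_lt_pow_left₀ hs (abs_nonneg s) (by norm_num)
  calc k * s ^ 2 < k * s0 k ^ 2 := by nlinarith [hk]
    _ = 1 / alph := ks0_sq hk

lemma ks_le (s : ℝ) (hs : |s| ≤ s0 k) : k * s ^ 2 ≤ 1 / alph := by
  have h1 : s ^ 2 ≤ s0 k ^ 2 := by
    rw [← sq_abs s]
    exact pow_le_pow_left₀ (abs_nonneg s) hs 2
  calc k * s ^ 2 ≤ k * s0 k ^ 2 := by nlinarith [hk]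
    _ = 1 / alph := ks0_sq hk

lemma ks_ge (s : ℝ) (hs : s0 k ≤ |s|) : 1 / alph ≤ k * s ^ 2 := by
  have h1 : s0 k ^ 2 ≤ s ^ 2 := by
    rw [← sq_abs s]
    exact pow_le_pow_left₀ (s0_pos hk).le hs 2
  calc (1:ℝ) / alph = k * s0 k ^ 2 := (ks0_sq hk).symm
    _ ≤ k * s ^ 2 := by nlinarith [hk]

lemma one_sub_ge (s : ℝ) (hs : |s| ≤ s0 k) : (3:ℝ)/4 ≤ 1 - k * s ^ 2 := by
  have := ks_le hk s hs; have := inv_alph_small; linarith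

lemma one_sub_pos (s : ℝ) (hs : |s| ≤ s0 k) : (0:ℝ) < 1 - k * s ^ 2 := by
  linarith [one_sub_ge hk s hs]

lemma g_eq_inner' (s : ℝ) (hs : |s| < s0 k) : g k s = Real.sqrt (1 - k * s ^ 2) := by
  rw [g, if_pos]; exact hs

lemma g_eq_outer (s : ℝ) (hs : s0 k ≤ |s|) :
    g k s = 1 / (bet * k * s ^ 2) + Real.sqrt 3 / 2 := by
  rw [g, if_neg]; exact not_lt.2 hs

lemma g_boundary (s : ℝ) (hs : |s| = s0 k) : g k s = Real.sqrt (1 - k * s ^ 2) := by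
  rw [g_eq_outer hk s hs.ge]
  have hksq : k * s ^ 2 = 1 / alph := by
    rw [← sq_abs s, hs]; exact ks0_sq hk
  have hb : bet * k * s ^ 2 = bet * (k * s ^ 2) := by ring
  rw [hb, hksq, junction_val]
  have h1 : bet * (1/alph) = 2/3 * alph * sa := by
    rw [bet_eq]; field_simp [alph_pos.ne']
  rw [h1]
  have h2 : (1:ℝ) / (2/3 * alph * sa) = 3 / (2 * alph * sa) := by
    rw [div_eq_div_iff (by nlinarith [alph_pos, sa_pos]) (by nlinarith [alph_pos, sa_pos])]
    ring
  rw [h2]; linarith [cont_id]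

lemma g_eq_inner (s : ℝ) (hs : |s| ≤ s0 k) : g k s = Real.sqrt (1 - k * s ^ 2) := by
  rcases lt_or_eq_of_le hs with h | h
  · exact g_eq_inner' hk s h
  · exact g_boundary hk s h

lemma g_ge (s : ℝ) : Real.sqrt 3 / 2 ≤ g k s := by
  rcases le_or_gt (|s|) (s0 k) with h | h
  · rw [g_eq_inner hk s h, ← sqrt34]
    exact Real.sqrt_le_sqrt (one_sub_ge hk s h)
  · rw [g_eq_outer hk s h.le]
    have : (0:ℝ) < 1 / (bet * k * s ^ 2) := by
      have hs2 : 0 < s ^ 2 := by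
        have h0 := (s0_pos hk).trans h
        have : s ≠ 0 := by intro h'; rw [h', abs_zero] at h0; linarith
        positivity
      have := bet_pos
      positivity
    linarith

lemma g_pos (s : ℝ) : 0 < g k s := by
  have := g_ge hk s; have := sqrt3_lb; linarith

lemma sne_of_ge (s : ℝ) (hs : s0 k ≤ |s|) : s ≠ 0 := by
  intro h'; rw [h', abs_zero] at hs; linarith [s0_pos hk]

lemma bks_pos (s : ℝ) (hs : s0 k ≤ |s|) : 0 < bet * k * s ^ 2 := by
  have hs2 : 0 < s ^ 2 := by
    have := sne_of_ge hk s hs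
    positivity
  exact mul_pos (mul_pos bet_pos hk) hs2

lemma outer_small (s : ℝ) (hs : s0 k ≤ |s|) : 1 / (bet * k * s ^ 2) ≤ 1 / 10 := by
  have h1 : 1 / alph ≤ k * s ^ 2 := ks_ge hk s hs
  have hbks : 0 < bet * k * s ^ 2 := bks_pos hk s hs
  have h1' : 1 ≤ k * s ^ 2 * alph := (div_le_iff₀ alph_pos).1 h1
  have h2 : 1 / (bet * k * s ^ 2) ≤ alph / bet := by
    rw [div_le_div_iff₀ hbks bet_pos]
    nlinarith [mul_le_mul_of_nonneg_left h1' bet_pos.le]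
  have h45 : (20.25:ℝ) ≤ alph * sa := by nlinarith [alph_lb, sa_lb]
  have h3 : alph / bet ≤ 1 / 10 := by
    rw [bet_eq, div_le_div_iff₀ (by nlinarith [alph_pos, sa_pos, h45]) (by norm_num)]
    nlinarith [h45, alph_pos, alph_lb]
  linarith

lemma g_le_one (s : ℝ) : g k s ≤ 1 := by
  rcases le_or_gt (|s|) (s0 k) with h | h
  · rw [g_eq_inner hk s h]
    exact Real.sqrt_le_one.2 (by nlinarith [sq_nonneg s, hk])
  · rw [g_eq_outer hk s h.le]
    have := outer_small hk s h.le
    have := sqrt3_ub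
    linarith
end
section
variable {k : ℝ} (hk : 0 < k)

noncomputable def D (k s : ℝ) : ℝ :=
  if |s| < 1 / Real.sqrt (alph * k) then -(k*s) / Real.sqrt (1 - k * s ^ 2)
  else -2 / (bet * k * s ^ 3)

include hk

lemma s0_def : s0 k = 1 / Real.sqrt (alph * k) := rfl

lemma hasDerivAt_inner (s : ℝ) (hs : |s| ≤ s0 k) :
    HasDerivAt (fun x => Real.sqrt (1 - k * x ^ 2)) (-(k*s) / Real.sqrt (1 - k * s ^ 2)) s := by
  have h0 : (0:ℝ) < 1 - k * s ^ 2 := one_sub_pos hk s hs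
  have h1 : HasDerivAt (fun x : ℝ => 1 - k * x ^ 2) (-(k * (2*s))) s := by
    simpa using ((hasDerivAt_pow 2 s).const_mul k).const_sub 1
  have h2 := h1.sqrt h0.ne'
  convert h2 using 1
  have hsq : Real.sqrt (1 - k * s ^ 2) ≠ 0 := (Real.sqrt_pos.2 h0).ne'
  field_simp

lemma hasDerivAt_outer (s : ℝ) (hs : s ≠ 0) :
    HasDerivAt (fun x => 1 / (bet * k * x ^ 2) + Real.sqrt 3 / 2) (-2 / (bet * k * s ^ 3)) s := by
  have hb : bet * k ≠ 0 := (mul_pos bet_pos hk).ne'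
  have h1 : HasDerivAt (fun x : ℝ => bet * k * x ^ 2) (bet * k * (2*s)) s := by
    simpa [mul_comm] using (hasDerivAt_pow 2 s).const_mul (bet * k)
  have hne : bet * k * s ^ 2 ≠ 0 := by
    have : s ^ 2 ≠ 0 := pow_ne_zero 2 hs
    exact mul_ne_zero hb this
  have h2 := (h1.inv hne).add_const (Real.sqrt 3 / 2)
  refine (h2.congr_deriv ?_).congr_of_eventuallyEq (Filter.Eventually.of_forall fun x => ?_)
  · rw [div_eq_div_iff (pow_ne_zero 2 hne) (mul_ne_zero hb (pow_ne_zero 3 hs))]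
    ring
  · simp [one_div]

lemma sqrt_at_boundary (s : ℝ) (hs : |s| = s0 k) :
    Real.sqrt (1 - k * s ^ 2) = sa / 3 := by
  have hksq : k * s ^ 2 = 1 / alph := by rw [← sq_abs s, hs]; exact ks0_sq hk
  rw [hksq, junction_val]

lemma deriv_match (s : ℝ) (hs : |s| = s0 k) :
    -(k*s) / Real.sqrt (1 - k * s ^ 2) = -2 / (bet * k * s ^ 3) := by
  have hksq : k * s ^ 2 = 1 / alph := by rw [← sq_abs s, hs]; exact ks0_sq hk
  have hs0 : s ≠ 0 := by
    intro h; rw [h] at hksq; simp at hksq; nlinarith [alph_pos, hksq]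
  rw [sqrt_at_boundary hk s hs]
  have hd : bet * k * s ^ 3 ≠ 0 :=
    mul_ne_zero (mul_ne_zero bet_pos.ne' hk.ne') (pow_ne_zero 3 hs0)
  rw [div_eq_div_iff (by nlinarith [sa_pos] : (sa/3 : ℝ) ≠ 0) hd]
  have h6 : alph * (k * s ^ 2) = 1 := by rw [hksq, mul_one_div, div_self alph_pos.ne']
  have h5 : alph ^ 2 * (k ^ 2 * s ^ 4) = 1 := by nlinarith [h6]
  rw [bet_eq]
  linear_combination (-(2:ℝ)/3 * sa) * h5
lemma D_inner (s : ℝ) (h : |s| < s0 k) : D k s = -(k*s) / Real.sqrt (1 - k * s ^ 2) := by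
  have h' : |s| < 1 / Real.sqrt (alph * k) := h
  rw [D, if_pos h']

lemma D_outer (s : ℝ) (h : s0 k ≤ |s|) : D k s = -2 / (bet * k * s ^ 3) := by
  have h' : 1 / Real.sqrt (alph * k) ≤ |s| := h
  rw [D, if_neg (not_lt.2 h')]

lemma hasDerivAt_g (s : ℝ) : HasDerivAt (g k) (D k s) s := by
  rcases lt_trichotomy (|s|) (s0 k) with h | h | h
  · rw [D_inner hk s h]
    have hU : IsOpen {x : ℝ | |x| < s0 k} := isOpen_lt continuous_abs continuous_const
    exact (hasDerivAt_inner hk s h.le).congr_of_eventuallyEq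
      (eventually_of_mem (hU.mem_nhds h) fun x hx => g_eq_inner' hk x hx)
  · have hpos := s0_pos hk
    have hsne : s ≠ 0 := by
      intro h'; rw [h', abs_zero] at h; linarith
    rw [D_outer hk s h.ge]
    rcases (abs_eq hpos.le).1 h with rfl | rfl
    · -- s = s0 k
      have hr : HasDerivWithinAt (g k) (-2 / (bet * k * s0 k ^ 3)) (Ici (s0 k)) (s0 k) :=
        (hasDerivAt_outer hk _ hsne).hasDerivWithinAt.congr
          (fun x hx => g_eq_outer hk x (by
            rw [abs_of_pos (lt_of_lt_of_le hpos hx)]; exact hx))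
          (g_eq_outer hk _ h.ge)
      have hev : (g k) =ᶠ[𝓝[Iic (s0 k)] (s0 k)] (fun x => Real.sqrt (1 - k * x ^ 2)) := by
        have h1 : Ioi (-(s0 k)) ∈ 𝓝[Iic (s0 k)] (s0 k) :=
          mem_nhdsWithin_of_mem_nhds (Ioi_mem_nhds (by linarith))
        filter_upwards [h1, self_mem_nhdsWithin] with x hx1 hx2
        exact g_eq_inner hk x (abs_le.2 ⟨le_of_lt hx1, hx2⟩)
      have hl : HasDerivWithinAt (g k) (-2 / (bet * k * s0 k ^ 3)) (Iic (s0 k)) (s0 k) := by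
        rw [← deriv_match hk _ h]
        exact ((hasDerivAt_inner hk _ h.le).hasDerivWithinAt).congr_of_eventuallyEq hev
          (g_eq_inner hk _ h.le)
      have hu := hl.union hr
      rw [Iic_union_Ici] at hu
      exact hu.hasDerivAt univ_mem
    · -- s = -(s0 k)
      have hl : HasDerivWithinAt (g k) (-2 / (bet * k * (-(s0 k)) ^ 3)) (Iic (-(s0 k))) (-(s0 k)) :=
        (hasDerivAt_outer hk _ hsne).hasDerivWithinAt.congr
          (fun x hx => g_eq_outer hk x (by
            have hx' : x ≤ -(s0 k) := hx
            rw [abs_of_neg (by linarith)]; linarith))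
          (g_eq_outer hk _ h.ge)
      have hev : (g k) =ᶠ[𝓝[Ici (-(s0 k))] (-(s0 k))] (fun x => Real.sqrt (1 - k * x ^ 2)) := by
        have h1 : Iio (s0 k) ∈ 𝓝[Ici (-(s0 k))] (-(s0 k)) :=
          mem_nhdsWithin_of_mem_nhds (Iio_mem_nhds (by linarith))
        filter_upwards [h1, self_mem_nhdsWithin] with x hx1 hx2
        exact g_eq_inner hk x (abs_le.2 ⟨hx2, le_of_lt hx1⟩)
      have hr : HasDerivWithinAt (g k) (-2 / (bet * k * (-(s0 k)) ^ 3)) (Ici (-(s0 k))) (-(s0 k)) := by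
        rw [← deriv_match hk _ h]
        exact ((hasDerivAt_inner hk _ h.le).hasDerivWithinAt).congr_of_eventuallyEq hev
          (g_eq_inner hk _ h.le)
      have hu := hl.union hr
      rw [Iic_union_Ici] at hu
      exact hu.hasDerivAt univ_mem
  · have hsne : s ≠ 0 := by
      intro h'; rw [h', abs_zero] at h; linarith [s0_pos hk]
    rw [D_outer hk s h.le]
    have hU : IsOpen {x : ℝ | s0 k < |x|} := isOpen_lt continuous_const continuous_abs
    exact (hasDerivAt_outer hk s hsne).congr_of_eventuallyEq
      (eventually_of_mem (hU.mem_nhds h) fun x hx => g_eq_outer hk x (le_of_lt hx))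

lemma D_mul_inner (s : ℝ) (h : |s| < s0 k) :
    D k s * s = -(k * s ^ 2) / Real.sqrt (1 - k * s ^ 2) := by
  rw [D_inner hk s h]; ring

lemma D_mul_outer (s : ℝ) (h : s0 k ≤ |s|) :
    D k s * s = -2 / (bet * k * s ^ 2) := by
  have hs := sne_of_ge hk s h
  have hA : bet * k * s ^ 3 ≠ 0 :=
    mul_ne_zero (mul_ne_zero bet_pos.ne' hk.ne') (pow_ne_zero 3 hs)
  rw [D_outer hk s h, div_mul_eq_mul_div, div_eq_div_iff hA (bks_pos hk s h).ne']
  ring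

lemma D_mul_nonpos (s : ℝ) : D k s * s ≤ 0 := by
  rcases lt_or_ge (|s|) (s0 k) with h | h
  · rw [D_mul_inner hk s h]
    apply div_nonpos_of_nonpos_of_nonneg
    · nlinarith [sq_nonneg s, hk]
    · exact Real.sqrt_nonneg _
  · rw [D_mul_outer hk s h]
    apply div_nonpos_of_nonpos_of_nonneg
    · norm_num
    · exact (bks_pos hk s h).le

lemma D_mul_ge (s : ℝ) : -(g k s) ≤ D k s * s := by
  rcases lt_or_ge (|s|) (s0 k) with h | h
  · rw [D_mul_inner hk s h, g_eq_inner hk s h.le]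
    have h0 : (0:ℝ) < 1 - k * s ^ 2 := one_sub_pos hk s h.le
    have hr : 0 < Real.sqrt (1 - k * s ^ 2) := Real.sqrt_pos.2 h0
    have hr2 : Real.sqrt (1 - k * s ^ 2) ^ 2 = 1 - k * s ^ 2 := Real.sq_sqrt h0.le
    have hks : k * s ^ 2 < 1 / alph := ks_lt hk s h
    have hsmall : k * s ^ 2 ≤ 2 / 15 := le_trans hks.le inv_alph_small
    rw [neg_le, neg_div, neg_neg, div_le_iff₀ hr]
    nlinarith [hr2, hr]
  · rw [D_mul_outer hk s h, g_eq_outer hk s h]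
    have hbks := bks_pos hk s h
    have hos := outer_small hk s h
    have h3 := sqrt3_lb
    have key : 1 / (bet * k * s ^ 2) ≤ Real.sqrt 3 / 2 := by linarith
    have : -2 / (bet * k * s ^ 2) = -(1 / (bet * k * s ^ 2)) - 1 / (bet * k * s ^ 2) := by
      ring
    rw [this]
    linarith

lemma g_cont : Continuous (g k) :=
  continuous_iff_continuousAt.2 fun s => (hasDerivAt_g hk s).continuousAt

lemma hasDerivAt_G (t : ℝ) : HasDerivAt (G k) (g k t) t :=
  ((g_cont hk).integral_hasStrictDerivAt 0 t).hasDerivAt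

lemma G_strictMono : StrictMono (G k) :=
  strictMono_of_deriv_pos fun x => by
    rw [(hasDerivAt_G hk x).deriv]; exact g_pos hk x

lemma G_lower (t : ℝ) : Real.sqrt 3 / 2 * |t| ≤ |G k t| := by
  have hint : ∀ a b : ℝ, a ≤ b → Real.sqrt 3 / 2 * (b - a) ≤ ∫ s in a..b, g k s := by
    intro a b hab
    have h1 : ∫ s in a..b, (Real.sqrt 3 / 2 : ℝ) ≤ ∫ s in a..b, g k s := by
      apply intervalIntegral.integral_mono_on hab (intervalIntegrable_const)
        ((g_cont hk).intervalIntegrable a b)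
      intro x _
      exact g_ge hk x
    rwa [intervalIntegral.integral_const, smul_eq_mul, mul_comm] at h1
  rcases le_or_gt 0 t with ht | ht
  · have h1 := hint 0 t ht
    simp only [sub_zero] at h1
    have hG : Real.sqrt 3 / 2 * t ≤ G k t := h1
    have hGnn : 0 ≤ G k t := le_trans (by positivity) hG
    rw [abs_of_nonneg hGnn, abs_of_nonneg ht]
    exact hG
  · have h1 := hint t 0 ht.le
    simp only [zero_sub] at h1
    have hsym : G k t = -∫ s in t..(0:ℝ), g k s := by
      rw [G, intervalIntegral.integral_symm]
    have hG : G k t ≤ Real.sqrt 3 / 2 * t := by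
      rw [hsym]; linarith [h1]
    have hGneg : G k t ≤ 0 := le_trans hG (by nlinarith [sqrt3_lb])
    rw [abs_of_nonpos hGneg, abs_of_neg ht]
    linarith
end

/-- ψ(v) = g(G⁻¹(v))·G⁻¹(v) is differentiable with
ψ'(v) = 1 + g'(G⁻¹(v))·G⁻¹(v)/g(G⁻¹(v)), 0 ≤ ψ'(v) ≤ 1, and |ψ(v)| ≤ (2/√3)|v|. -/
theorem stmt13 (k : ℝ) (hk : 0 < k) (Ginv : ℝ → ℝ)
    (hL : Function.LeftInverse Ginv (G k)) (hR : Function.RightInverse Ginv (G k)) :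
    (∀ v : ℝ, HasDerivAt (fun w : ℝ => g k (Ginv w) * Ginv w)
      (1 + deriv (g k) (Ginv v) * Ginv v / g k (Ginv v)) v) ∧
    (∀ v : ℝ, 0 ≤ 1 + deriv (g k) (Ginv v) * Ginv v / g k (Ginv v) ∧
      1 + deriv (g k) (Ginv v) * Ginv v / g k (Ginv v) ≤ 1) ∧
    (∀ v : ℝ, |g k (Ginv v) * Ginv v| ≤ 2 / Real.sqrt 3 * |v|) := by
  have hsurj : Function.Surjective (G k) := fun y => ⟨Ginv y, hR y⟩
  have hmono := G_strictMono hk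
  have hGinvCont : Continuous Ginv := by
    have heq : Ginv = ⇑(StrictMono.orderIsoOfSurjective (G k) hmono hsurj).symm := by
      funext y
      apply hmono.injective
      rw [hR y]
      exact ((StrictMono.orderIsoOfSurjective (G k) hmono hsurj).apply_symm_apply y).symm
    rw [heq]
    exact (StrictMono.orderIsoOfSurjective (G k) hmono hsurj).symm.continuous
  have hDG : ∀ v : ℝ, HasDerivAt Ginv (g k (Ginv v))⁻¹ v := fun v =>
    HasDerivAt.of_local_left_inverse hGinvCont.continuousAt (hasDerivAt_G hk (Ginv v))
      (g_pos hk _).ne' (Filter.Eventually.of_forall hR)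
  have hderiv_g : ∀ t : ℝ, deriv (g k) t = D k t := fun t => (hasDerivAt_g hk t).deriv
  have hψ : ∀ v : ℝ, HasDerivAt (fun w : ℝ => g k (Ginv w) * Ginv w)
      ((D k (Ginv v) * Ginv v + g k (Ginv v) * 1) * (g k (Ginv v))⁻¹) v := by
    intro v
    have hcomp := ((hasDerivAt_g hk (Ginv v)).mul (hasDerivAt_id (Ginv v))).comp v (hDG v)
    exact hcomp
  have hval : ∀ v : ℝ, (D k (Ginv v) * Ginv v + g k (Ginv v) * 1) * (g k (Ginv v))⁻¹
      = 1 + deriv (g k) (Ginv v) * Ginv v / g k (Ginv v) := by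
    intro v
    rw [hderiv_g (Ginv v)]
    have hg0 : g k (Ginv v) ≠ 0 := (g_pos hk _).ne'
    field_simp
    ring
  refine ⟨fun v => ?_, fun v => ?_, fun v => ?_⟩
  · have := hψ v
    rwa [hval v] at this
  · rw [hderiv_g (Ginv v)]
    set t := Ginv v
    have hg := g_pos hk t
    constructor
    · have hge := D_mul_ge hk t
      have : -(1:ℝ) ≤ D k t * t / g k t := by
        rw [le_div_iff₀ hg]; linarith
      linarith
    · have hnp := D_mul_nonpos hk t
      have : D k t * t / g k t ≤ 0 := div_nonpos_of_nonpos_of_nonneg hnp hg.le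
      linarith
  · set t := Ginv v with htdef
    have hv : G k t = v := hR v
    have hg := g_pos hk t
    have h1 : |g k t * t| ≤ |t| := by
      rw [abs_mul, abs_of_pos hg]
      nlinarith [g_le_one hk t, abs_nonneg t, hg]
    have h2 := G_lower hk t
    rw [hv] at h2
    have h3 : |t| ≤ 2 / Real.sqrt 3 * |v| := by
      have hs3 : (0:ℝ) < Real.sqrt 3 := by linarith [sqrt3_lb]
      have hmul := mul_le_mul_of_nonneg_left h2 (by positivity : (0:ℝ) ≤ 2 / Real.sqrt 3)
      calc |t| = 2 / Real.sqrt 3 * (Real.sqrt 3 / 2 * |t|) := by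
            field_simp
        _ ≤ 2 / Real.sqrt 3 * |v| := hmul
    linarith [h1, h3]
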